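/- arXiv:2311.15869 — 2 statements merged into one kernel-verified Lean document; each statement's English description precedes it below -/
import Mathlib

section
/- For all z, w in the open unit ball of ℂⁿ with w ≠ 0 (so that the involutive automorphism Φ_z is defined), one has |z - Φ_z(w)| ≥ |w|(1 - |z|²)/|1 - ⟨z,w⟩|, where ⟨·,·⟩ is the Hermitian inner product on ℂⁿ. -/
open MeasureTheory
open scoped ENNReal

noncomputable section

/-- `ℂⁿ` with the Euclidean (Hermitian) norm. -/
abbrev Cn (n : ℕ) := EuclideanSpace ℂ (Fin n)

/-- Lebesgue volume measure on `ℂⁿ`. -/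
instance (n : ℕ) : MeasureSpace (Cn n) := by
  exact ⟨Measure.map (WithLp.toLp 2) (volume : Measure (Fin n → ℂ))⟩

/-- The open unit ball `𝔹` of `ℂⁿ`. -/
def ball1 (n : ℕ) : Set (Cn n) := Metric.ball 0 1

/-- `⟨z,w⟩`: the Hermitian inner product in the paper's convention
(linear in `z`, conjugate-linear in `w`); in Mathlib's convention this is `inner w z`. -/
def ip {n : ℕ} (z w : Cn n) : ℂ := inner ℂ w z

/-- The numerator `a - P_a z - s_a Q_a z` of the Möbius automorphism `Φ_a`, where
`P_a z = (⟨z,a⟩/|a|²)a`, `Q_a = I - P_a` and `s_a = √(1-|a|²)`. -/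
def numer {n : ℕ} (a z : Cn n) : Cn n :=
  a - ((ip z a) / ((‖a‖ ^ 2 : ℝ) : ℂ)) • a
    - ((Real.sqrt (1 - ‖a‖ ^ 2) : ℝ) : ℂ) • (z - ((ip z a) / ((‖a‖ ^ 2 : ℝ) : ℂ)) • a)

/-- The involutive Möbius automorphism `Φ_a(z) = (a - P_a z - s_a Q_a z)/(1 - ⟨z,a⟩)`. -/
def phi {n : ℕ} (a z : Cn n) : Cn n := (1 - ip z a)⁻¹ • numer a z

set_option maxHeartbeats 1000000 in
theorem stmt0 (n : ℕ) (z w : Cn n) (hz : z ∈ ball1 n) (hw : w ∈ ball1 n) (hw0 : w ≠ 0) :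
    ‖z - phi z w‖ ≥ ‖w‖ * (1 - ‖z‖ ^ 2) / ‖1 - ip z w‖ := by
  have hz1 : ‖z‖ < 1 := by simpa [ball1] using hz
  have hw1 : ‖w‖ < 1 := by simpa [ball1] using hw
  by_cases hz0 : z = 0
  · subst hz0
    have h1 : phi (0 : Cn n) w = -w := by
      simp [phi, numer, ip, Real.sqrt_one]
    simp [h1, ip]
  · set x := ‖z‖ with hx
    have hx0 : 0 < x := norm_pos_iff.mpr hz0
    have hx2 : (x ^ 2 : ℝ) ≠ 0 := by positivity
    set l : ℂ := inner ℂ z w with hl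
    have hCS : ‖l‖ ≤ x * ‖w‖ := norm_inner_le_norm z w
    have hl1 : ‖l‖ < 1 := lt_of_le_of_lt hCS (by nlinarith [norm_nonneg w])
    have h1l : (1 : ℂ) - l ≠ 0 := by
      intro h
      have : l = 1 := by linear_combination -h
      simp [this] at hl1
    set c : ℂ := l / ((x ^ 2 : ℝ) : ℂ) with hc
    set s : ℝ := Real.sqrt (1 - x ^ 2) with hs
    have hs2 : s ^ 2 = 1 - x ^ 2 := Real.sq_sqrt (by nlinarith)
    have hs0 : 0 ≤ s := Real.sqrt_nonneg _
    have hipzw : ‖1 - ip z w‖ = ‖1 - l‖ := by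
      have h : (1 : ℂ) - ip z w = starRingEnd ℂ (1 - l) := by
        unfold ip; rw [hl, map_sub, map_one, inner_conj_symm]
      rw [h, RCLike.norm_conj]
    have hN : numer z w = z - c • z - (s : ℂ) • (w - c • z) := rfl
    have hmul : ((1:ℂ) - l) • (z - phi z w) = (c - l) • z + (s : ℂ) • (w - c • z) := by
      rw [phi, smul_sub]
      have hip : ip w z = l := rfl
      rw [hip, smul_inv_smul₀ h1l, hN]
      module
    have hxc : ((x ^ 2 : ℝ) : ℂ) = (x : ℂ) ^ 2 := by push_cast; ring
    have hx2c : ((x : ℂ)) ^ 2 ≠ 0 := by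
      simp only [← hxc]; exact_mod_cast hx2
    have hclz : c * (x : ℂ) ^ 2 = l := by
      rw [hc, hxc]; field_simp
      rw [mul_div_assoc, div_self (by exact_mod_cast hx0.ne'), mul_one]
    have hlconj : l * starRingEnd ℂ l = ((‖l‖ ^ 2 : ℝ) : ℂ) := by
      rw [Complex.mul_conj]
      simp [Complex.normSq_eq_norm_sq]
    have hperp : (inner ℂ ((c - l) • z) ((s : ℂ) • (w - c • z)) : ℂ) = 0 := by
      rw [inner_smul_left, inner_smul_right, inner_sub_right, inner_smul_right,
        inner_self_eq_norm_sq_to_K, ← hl, ← hx, hc, hxc]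
      push_cast
      field_simp
      simp [div_self hx2c]
    have hpyth := norm_add_sq_eq_norm_sq_add_norm_sq_of_inner_eq_zero _ _ hperp
    have hA : ‖(c - l) • z‖ = ‖l‖ * ((1 - x ^ 2) / x ^ 2) * x := by
      have h1 : c - l = l * (((1 - x ^ 2) / x ^ 2 : ℝ) : ℂ) := by
        rw [hc]; push_cast; field_simp
        rw [mul_div_assoc, sub_div, div_self hx2c]
      rw [norm_smul, h1, norm_mul, Complex.norm_real, Real.norm_eq_abs,
        abs_of_nonneg (div_nonneg (by nlinarith) (by positivity)), ← hx]
    have hB : ‖(s : ℂ) • (w - c • z)‖ = s * ‖w - c • z‖ := by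
      rw [norm_smul, Complex.norm_real, Real.norm_eq_abs, abs_of_nonneg hs0]
    have hwz : (inner ℂ w z : ℂ) = starRingEnd ℂ l := by
      rw [hl, inner_conj_symm]
    have hwcz : ‖w - c • z‖ ^ 2 = ‖w‖ ^ 2 - ‖l‖ ^ 2 / x ^ 2 := by
      rw [norm_sub_sq (𝕜 := ℂ)]
      have h1 : (inner ℂ w (c • z) : ℂ) = ((‖l‖ ^ 2 / x ^ 2 : ℝ) : ℂ) := by
        rw [inner_smul_right, hwz, hc, hxc, div_mul_eq_mul_div, hlconj]
        push_cast
        ring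
      have h2 : RCLike.re (inner ℂ w (c • z) : ℂ) = ‖l‖ ^ 2 / x ^ 2 := by
        rw [h1]; exact RCLike.ofReal_re _
      have h3 : ‖c • z‖ ^ 2 = ‖l‖ ^ 2 / x ^ 2 := by
        rw [norm_smul, hc, norm_div, Complex.norm_real, Real.norm_eq_abs, ← hx,
          abs_of_nonneg (by positivity : (0:ℝ) ≤ x ^ 2)]
        field_simp
      rw [h2, h3]
      ring
    -- combine
    set V := ‖(c - l) • z + (s : ℂ) • (w - c • z)‖ with hV
    have hV2 : V ^ 2 = (1 - x ^ 2) * (‖w‖ ^ 2 - ‖l‖ ^ 2) := by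
      have h6 : V ^ 2 = (‖l‖ * ((1 - x ^ 2) / x ^ 2) * x) ^ 2 + (s * ‖w - c • z‖) ^ 2 := by
        rw [sq, hpyth, hA, hB]; ring
      rw [h6, mul_pow s ‖w - c • z‖, hs2, hwcz, mul_pow, mul_pow]
      field_simp
      ring
    have hVnn : 0 ≤ V := norm_nonneg _
    have htnn : 0 ≤ ‖w‖ * (1 - x ^ 2) := by nlinarith [norm_nonneg w]
    have hVge : V ≥ ‖w‖ * (1 - x ^ 2) := by
      have hLW : ‖l‖ ^ 2 ≤ x ^ 2 * ‖w‖ ^ 2 := by nlinarith [norm_nonneg l, norm_nonneg w]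
      nlinarith [sq_nonneg (V - ‖w‖ * (1 - x ^ 2)), sq_nonneg (V + ‖w‖ * (1 - x ^ 2))]
    have hnorm1 : ‖1 - l‖ * ‖z - phi z w‖ = V := by
      rw [hV, ← hmul]; exact (norm_smul _ _).symm
    have h1lpos : 0 < ‖1 - l‖ := norm_pos_iff.mpr h1l
    rw [hipzw, ge_iff_le, div_le_iff₀ h1lpos]
    calc ‖w‖ * (1 - x ^ 2) ≤ V := hVge
    _ = ‖z - phi z w‖ * ‖1 - l‖ := by rw [← hnorm1]; ring
end
end

section
/- For every z in the open unit ball 𝔹 of ℂⁿ with z ≠ 0, the map Φ_z is an involution: Φ_z(Φ_z(w)) = w for all w ∈ 𝔹; moreover Φ_z(0) = z and Φ_z(z) = 0. -/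
open MeasureTheory
open scoped ENNReal

noncomputable section

theorem stmt17 (n : ℕ) (z : Cn n) (hz : z ∈ ball1 n) (hz0 : z ≠ 0) :
    (∀ w ∈ ball1 n, phi z (phi z w) = w) ∧ phi z 0 = z ∧ phi z z = 0 := by
  have hz1 : ‖z‖ < 1 := by simpa [ball1, mem_ball_zero_iff] using hz
  set t : ℂ := ((‖z‖ ^ 2 : ℝ) : ℂ) with ht
  set s : ℂ := ((Real.sqrt (1 - ‖z‖ ^ 2) : ℝ) : ℂ) with hs
  have ht0 : t ≠ 0 := by
    simp only [ht, Complex.ofReal_ne_zero]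
    exact pow_ne_zero 2 (norm_ne_zero_iff.mpr hz0)
  have hnorm : ‖z‖ ^ 2 < 1 := by nlinarith [norm_nonneg z]
  have h1t : (1 : ℂ) - t ≠ 0 := by
    rw [ht, sub_ne_zero]
    intro h
    have : (1 : ℝ) = ‖z‖ ^ 2 := by exact_mod_cast h
    linarith
  have hs2 : s ^ 2 = 1 - t := by
    simp only [hs, ht, ← Complex.ofReal_pow, ← Complex.ofReal_one, ← Complex.ofReal_sub]
    congr 1
    exact Real.sq_sqrt (by linarith)
  have hzz : (inner ℂ z z : ℂ) = t := by
    rw [inner_self_eq_norm_sq_to_K, ht]; norm_cast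
  have key : ∀ w : Cn n, phi z w
      = ((1 - ip w z)⁻¹ * (1 - (1 - s) * (ip w z) / t)) • z
        + (-((1 - ip w z)⁻¹ * s)) • w := by
    intro w
    simp only [phi, numer, ← ht, ← hs]
    match_scalars <;> ring
  have ipnice : ∀ (c₁ c₂ : ℂ) (w : Cn n), ip (c₁ • z + c₂ • w) z = c₁ * t + c₂ * ip w z := by
    intro c₁ c₂ w
    simp [ip, inner_add_right, inner_smul_right, hzz, ht]
  refine ⟨?_, ?_, ?_⟩
  · intro w hw
    have hw1 : ‖w‖ < 1 := by simpa [ball1, mem_ball_zero_iff] using hw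
    set α : ℂ := ip w z with hα
    have hα1 : (1 : ℂ) - α ≠ 0 := by
      intro h
      have hle : ‖α‖ ≤ ‖z‖ * ‖w‖ := norm_inner_le_norm (𝕜 := ℂ) z w
      have : α = 1 := by linear_combination -h
      rw [this] at hle
      simp at hle
      nlinarith [norm_nonneg z, norm_nonneg w]
    have hip : ip (phi z w) z = (1 - α)⁻¹ * (t - α) := by
      rw [key w, ipnice, ← hα]
      field_simp
      ring
    have hβ : (1 : ℂ) - ip (phi z w) z = (1 - α)⁻¹ * (1 - t) := by
      rw [hip]
      field_simp
      ring
    have hβ0 : (1 : ℂ) - ip (phi z w) z ≠ 0 := by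
      rw [hβ]
      exact mul_ne_zero (inv_ne_zero hα1) h1t
    rw [key (phi z w), hip, key w]
    rw [hβ] at *
    match_scalars
    · rw [← hα]
      field_simp
      rw [show (1:ℂ) - α - (t - α) = 1 - t by ring]
      field_simp
      linear_combination (-α) * hs2
    · rw [← hα]
      field_simp
      rw [show (1:ℂ) - α - (t - α) = 1 - t by ring]
      field_simp
      linear_combination hs2
  · rw [key 0]
    simp [ip]
  · rw [key z]
    have : ip z z = t := hzz
    rw [this]
    match_scalars
    field_simp
    ring
end
end
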